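/- There exists a universal constant C > 0 with the following property: let (Ω, F, P) be a probability space with filtration (F_ℓ)_{ℓ≥0}, and let (X_ℓ)_{ℓ≥1} be a martingale difference sequence with respect to (F_ℓ) satisfying |X_ℓ| ≤ R almost surely for all ℓ. Then for any δ′ ∈ (0,1) and any η ∈ (0, 1/R), with probability at least 1 − δ′, simultaneously for all natural numbers t ≥ 1, Σ_{ℓ=1}^t X_ℓ ≤ η·Σ_{ℓ=1}^t E[X_ℓ² | F_{ℓ−1}] + C·log(t/δ′)/η. -/

import Mathlib

open MeasureTheory ProbabilityTheory


lemma my_exp_le {u : ℝ} (h : u ≤ 1) : Real.exp u ≤ 1 + u + u ^ 2 := by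
  rcases le_or_gt (-1) u with h1 | h1
  · have habs : |u| ≤ 1 := abs_le.2 ⟨h1, h⟩
    have hb := Real.exp_bound habs (n := 2) (by norm_num)
    have hsum : ∑ i ∈ Finset.range 2, u ^ i / (Nat.factorial i) = 1 + u := by
      simp [Finset.sum_range_succ]
    rw [hsum] at hb
    have h2 : Real.exp u - (1 + u) ≤ |u| ^ 2 * ((2:ℕ).succ / ((2:ℕ).factorial * 2)) :=
      (le_abs_self _).trans hb
    have h3 : |u| ^ 2 = u ^ 2 := sq_abs u
    have h4 : ((2:ℕ).succ / ((2:ℕ).factorial * 2) : ℝ) = 3/4 := by norm_num [Nat.factorial]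
    rw [h3, h4] at h2
    nlinarith [sq_nonneg u]
  · have h2 : Real.exp u ≤ 1 := Real.exp_le_one_iff.2 (by linarith)
    nlinarith

/-- Ville's inequality for a nonnegative supermartingale started at 1. -/
lemma my_ville {Ω : Type} [m0 : MeasurableSpace Ω] {P : Measure Ω} [IsProbabilityMeasure P]
    {𝓕 : Filtration ℕ m0} {f : ℕ → Ω → ℝ} (hf : Supermartingale f 𝓕 P)
    (hnonneg : ∀ t ω, 0 ≤ f t ω) (hf0 : f 0 = fun _ => 1) {a : ℝ} (ha : 0 < a) :
    P {ω | ∃ t, a ≤ f t ω} ≤ ENNReal.ofReal (1 / a) := by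
  set A : ℕ → Set Ω := fun n => {ω | ∃ k ≤ n, a ≤ f k ω} with hA
  have hAmeas : ∀ n, MeasurableSet (A n) := by
    intro n
    have : A n = ⋃ k, ⋃ (_ : k ≤ n), {ω | a ≤ f k ω} := by
      ext ω; simp [hA]
    rw [this]
    exact MeasurableSet.iUnion fun k => MeasurableSet.iUnion fun _ =>
      measurableSet_le measurable_const (((hf.stronglyAdapted k).mono (𝓕.le k)).measurable)
  have hmono : Monotone A := by
    intro i j hij ω ⟨k, hk, hak⟩
    exact ⟨k, hk.trans hij, hak⟩
  have hU : {ω | ∃ t, a ≤ f t ω} = ⋃ n, A n := by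
    ext ω
    simp only [Set.mem_setOf_eq, Set.mem_iUnion, hA]
    exact ⟨fun ⟨t, ht⟩ => ⟨t, t, le_rfl, ht⟩, fun ⟨n, k, _, hk⟩ => ⟨k, hk⟩⟩
  rw [hU, hmono.directed_le.measure_iUnion]
  refine iSup_le fun n => ?_
  set τ := fun ω => ((hittingBtwn f (Set.Ici a) 0 n ω : ℕ) : WithTop ℕ) with hτdef
  have hτ : IsStoppingTime 𝓕 τ := Adapted.isStoppingTime_hittingBtwn (fun i => (hf.stronglyAdapted i).measurable) measurableSet_Ici
  have hτle : ∀ ω, τ ω ≤ n := fun ω => WithTop.coe_le_coe.2 (hittingBtwn_le ω)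
  have hsv_int : Integrable (stoppedValue f τ) P :=
    integrable_stoppedValue ℕ hτ hf.integrable hτle
  have hexp : ∫ ω, stoppedValue f τ ω ∂P ≤ 1 := by
    have hmono' := hf.neg.expected_stoppedValue_mono (isStoppingTime_const 𝓕 0) hτ
      (fun ω => WithTop.coe_le_coe.2 (Nat.zero_le _)) hτle
    have h0 : stoppedValue (-f) (fun _ => ((0:ℕ) : WithTop ℕ)) = -f 0 := stoppedValue_const (-f) 0
    have h1 : stoppedValue (-f) τ = -stoppedValue f τ := rfl
    change ∫ x, (-f 0) x ∂P ≤ _ at hmono'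
    rw [h1, hf0] at hmono'
    simp only [Pi.neg_apply] at hmono'
    rw [integral_neg, integral_neg] at hmono'
    simp only [integral_const, measure_univ, probReal_univ, smul_eq_mul, one_mul,
      neg_le_neg_iff] at hmono'
    exact hmono'
  have hge : ∀ ω ∈ A n, a ≤ stoppedValue f τ ω := by
    rintro ω ⟨k, hk, hak⟩
    exact stoppedValue_hittingBtwn_mem ⟨k, ⟨Nat.zero_le _, hk⟩, hak⟩
  have h1 : a * (P (A n)).toReal ≤ ∫ ω in A n, stoppedValue f τ ω ∂P :=
    by
      have := setIntegral_ge_of_const_le (hAmeas n) (measure_ne_top _ _) hge hsv_int.integrableOn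
      rw [smul_eq_mul, mul_comm] at this
      exact this
  have h2 : ∫ ω in A n, stoppedValue f τ ω ∂P ≤ ∫ ω, stoppedValue f τ ω ∂P :=
    setIntegral_le_integral hsv_int (ae_of_all _ fun ω => hnonneg _ _)
  have h3 : (P (A n)).toReal ≤ 1 / a := by
    rw [le_div_iff₀ ha]
    nlinarith [h1, h2, hexp]
  calc P (A n) = ENNReal.ofReal (P (A n)).toReal :=
        (ENNReal.ofReal_toReal (measure_ne_top _ _)).symm
    _ ≤ ENNReal.ofReal (1 / a) := ENNReal.ofReal_le_ofReal h3

/-- Anytime Freedman inequality: there is a universal constant `C > 0` such that for any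
martingale difference sequence `(X_ℓ)` with `|X_ℓ| ≤ R` a.s., any `δ' ∈ (0,1)` and
`η ∈ (0, 1/R)`, with probability at least `1 − δ'`, simultaneously for all `t ≥ 1`,
`Σ_{ℓ=1}^t X_ℓ ≤ η·Σ_{ℓ=1}^t E[X_ℓ² | F_{ℓ−1}] + C·log(t/δ')/η`. -/
theorem stmt_7 :
    ∃ C : ℝ, 0 < C ∧
      ∀ (Ω : Type) [m0 : MeasurableSpace Ω] (P : Measure Ω) [IsProbabilityMeasure P]
        (𝓕 : Filtration ℕ m0) (R : ℝ) (X : ℕ → Ω → ℝ),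
        (∀ ℓ, StronglyMeasurable[𝓕 ℓ] (X ℓ)) →
        (∀ ℓ, Integrable (X ℓ) P) →
        (∀ ℓ, 1 ≤ ℓ → P[X ℓ | 𝓕 (ℓ - 1)] =ᵐ[P] 0) →
        (∀ ℓ, ∀ᵐ ω ∂P, |X ℓ ω| ≤ R) →
        ∀ δ' η : ℝ, 0 < δ' → δ' < 1 → 0 < η → η < 1 / R →
        ENNReal.ofReal (1 - δ') ≤
          P {ω | ∀ t : ℕ, 1 ≤ t →
            ∑ ℓ ∈ Finset.Icc 1 t, X ℓ ω ≤
              η * ∑ ℓ ∈ Finset.Icc 1 t, (P[fun ω' => (X ℓ ω') ^ 2 | 𝓕 (ℓ - 1)]) ω +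
                C * Real.log ((t : ℝ) / δ') / η} := by
  refine ⟨1, one_pos, ?_⟩
  intro Ω m0 P _ 𝓕 R X hmeas hint hmds hbdd δ' η hδ0 hδ1 hη0 hηR
  have hR : 0 < R := one_div_pos.mp (hη0.trans hηR)
  have hηR1 : η * R < 1 := (lt_div_iff₀ hR).mp hηR
  let Y : ℕ → Ω → ℝ := fun ℓ => P[fun ω' => (X ℓ ω') ^ 2 | 𝓕 (ℓ - 1)]
  let f : ℕ → Ω → ℝ := fun t ω =>
    Real.exp (η * ∑ ℓ ∈ Finset.Icc 1 t, X ℓ ω - η ^ 2 * ∑ ℓ ∈ Finset.Icc 1 t, Y ℓ ω)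
  have hf0 : f 0 = fun _ => 1 := by
    funext ω
    show Real.exp _ = 1
    norm_num
  have hYnn : ∀ ℓ, 0 ≤ᵐ[P] Y ℓ := fun ℓ => condExp_nonneg (ae_of_all _ fun ω => sq_nonneg _)
  have hYmeas : ∀ ℓ, StronglyMeasurable[𝓕 (ℓ - 1)] (Y ℓ) := fun ℓ => stronglyMeasurable_condExp
  have had : StronglyAdapted 𝓕 f := by
    intro t
    apply Real.continuous_exp.comp_stronglyMeasurable
    apply StronglyMeasurable.sub
    · exact (Finset.stronglyMeasurable_fun_sum _ fun ℓ hℓ =>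
        (hmeas ℓ).mono (𝓕.mono (Finset.mem_Icc.mp hℓ).2)).const_mul η
    · exact (Finset.stronglyMeasurable_fun_sum _ fun ℓ hℓ =>
        (hYmeas ℓ).mono (𝓕.mono ((Nat.sub_le ℓ 1).trans (Finset.mem_Icc.mp hℓ).2))).const_mul _
  have hX_ae : ∀ᵐ ω ∂P, ∀ ℓ, |X ℓ ω| ≤ R := ae_all_iff.2 hbdd
  have hY_ae : ∀ᵐ ω ∂P, ∀ ℓ, 0 ≤ Y ℓ ω := ae_all_iff.2 hYnn
  have hf_bd : ∀ t, ∀ᵐ ω ∂P, ‖f t ω‖ ≤ Real.exp (η * (t * R)) := by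
    intro t
    filter_upwards [hX_ae, hY_ae] with ω hX hY
    have h1 : ∑ ℓ ∈ Finset.Icc 1 t, X ℓ ω ≤ t * R := by
      calc ∑ ℓ ∈ Finset.Icc 1 t, X ℓ ω ≤ ∑ ℓ ∈ Finset.Icc 1 t, R :=
            Finset.sum_le_sum fun ℓ _ => (le_abs_self _).trans (hX ℓ)
        _ = t * R := by rw [Finset.sum_const, Nat.card_Icc]; simp
    have h2 : 0 ≤ ∑ ℓ ∈ Finset.Icc 1 t, Y ℓ ω := Finset.sum_nonneg fun ℓ _ => hY ℓ
    rw [Real.norm_eq_abs, abs_of_pos (Real.exp_pos _), Real.exp_le_exp]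
    nlinarith [sq_nonneg η]
  have hfint : ∀ t, Integrable (f t) P := fun t =>
    Integrable.mono' (integrable_const _) ((had t).mono (𝓕.le t)).aestronglyMeasurable (hf_bd t)
  -- the supermartingale step
  have hstep : ∀ t, P[f (t + 1)|𝓕 t] ≤ᵐ[P] f t := by
    intro t
    have h1t : (1:ℕ) ≤ t + 1 := Nat.le_add_left 1 t
    set G : Ω → ℝ := fun ω => f t ω * Real.exp (-(η ^ 2) * Y (t + 1) ω) with hG
    set Z : Ω → ℝ := fun ω => Real.exp (η * X (t + 1) ω) with hZ
    set X2 : Ω → ℝ := fun ω' => (X (t + 1) ω') ^ 2 with hX2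
    have hdecomp : f (t + 1) = G * Z := by
      funext ω
      show Real.exp _ = _ * _
      simp only [hG, hZ, Pi.mul_apply]
      rw [Finset.sum_Icc_succ_top h1t, Finset.sum_Icc_succ_top h1t,
        ← Real.exp_add, ← Real.exp_add]
      congr 1
      ring
    have hZ_meas : AEStronglyMeasurable Z P :=
      (Real.continuous_exp.comp_stronglyMeasurable
        (((hmeas (t + 1)).mono (𝓕.le _)).const_mul η)).aestronglyMeasurable
    have hZ_bd : ∀ᵐ ω ∂P, ‖Z ω‖ ≤ Real.exp (η * R) := by
      filter_upwards [hbdd (t + 1)] with ω hω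
      simp only [hZ]
      rw [Real.norm_eq_abs, abs_of_pos (Real.exp_pos _), Real.exp_le_exp]
      exact mul_le_mul_of_nonneg_left ((le_abs_self _).trans hω) hη0.le
    have hZ_int : Integrable Z P := Integrable.mono' (integrable_const _) hZ_meas hZ_bd
    have hG_meas : StronglyMeasurable[𝓕 t] G := by
      apply StronglyMeasurable.mul (had t)
      apply Real.continuous_exp.comp_stronglyMeasurable
      exact ((hYmeas (t + 1)).mono le_rfl).const_mul _
    have hGZ_int : Integrable (G * Z) P := hdecomp ▸ hfint (t + 1)
    have hpull : P[G * Z|𝓕 t] =ᵐ[P] G * P[Z|𝓕 t] :=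
      condExp_mul_of_stronglyMeasurable_left hG_meas hGZ_int hZ_int
    -- bound the conditional expectation of Z
    have hX2_int : Integrable X2 P := by
      refine Integrable.mono' (integrable_const (R ^ 2)) ?_ ?_
      · have hm := ((hmeas (t + 1)).mono (𝓕.le _))
        have : X2 = fun ω => X (t + 1) ω * X (t + 1) ω := by
          funext ω; simp only [hX2]; ring
        rw [this]
        exact (hm.mul hm).aestronglyMeasurable
      · filter_upwards [hbdd (t + 1)] with ω hω
        simp only [hX2]
        rw [Real.norm_eq_abs, abs_of_nonneg (sq_nonneg _)]
        nlinarith [abs_nonneg (X (t + 1) ω), sq_abs (X (t + 1) ω)]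
    have hW_int : Integrable ((fun _ => (1:ℝ)) + η • X (t + 1) + η ^ 2 • X2) P :=
      ((integrable_const 1).add ((hint (t + 1)).smul η)).add (hX2_int.smul (η ^ 2))
    have hZW : Z ≤ᵐ[P] (fun _ => (1:ℝ)) + η • X (t + 1) + η ^ 2 • X2 := by
      filter_upwards [hbdd (t + 1)] with ω hω
      have hu : η * X (t + 1) ω ≤ 1 :=
        le_trans (mul_le_mul_of_nonneg_left ((le_abs_self _).trans hω) hη0.le) hηR1.le
      have he := my_exp_le hu
      simp only [hZ, hX2, Pi.add_apply, Pi.smul_apply, smul_eq_mul]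
      calc Real.exp (η * X (t + 1) ω) ≤ 1 + η * X (t + 1) ω + (η * X (t + 1) ω) ^ 2 := he
        _ = 1 + η * X (t + 1) ω + η ^ 2 * X (t + 1) ω ^ 2 := by ring
    have e1 := condExp_add (m := 𝓕 t) ((integrable_const (1:ℝ)).add ((hint (t + 1)).smul η))
      (hX2_int.smul (η ^ 2))
    have e2 := condExp_add (m := 𝓕 t) (integrable_const (1:ℝ)) ((hint (t + 1)).smul η)
    have e3 := condExp_smul (m := 𝓕 t) (μ := P) η (X (t + 1))
    have e4 := condExp_smul (m := 𝓕 t) (μ := P) (η ^ 2) X2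
    have e5 : P[X (t + 1)|𝓕 t] =ᵐ[P] 0 := hmds (t + 1) h1t
    have e6 : P[X2|𝓕 t] = Y (t + 1) := rfl
    have e0 : P[(fun _ => (1:ℝ))|𝓕 t] = fun _ => (1:ℝ) := condExp_const (𝓕.le t) 1
    have hcondW : P[(fun _ => (1:ℝ)) + η • X (t + 1) + η ^ 2 • X2|𝓕 t] =ᵐ[P]
        fun ω => 1 + η ^ 2 * Y (t + 1) ω := by
      filter_upwards [e1, e2, e3, e4, e5] with ω h1 h2 h3 h4 h5
      rw [h1, Pi.add_apply, h2, Pi.add_apply, h3, h4, Pi.smul_apply, Pi.smul_apply, h5, e6, e0]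
      simp [smul_eq_mul]
    have hcond : P[Z|𝓕 t] ≤ᵐ[P] fun ω => Real.exp (η ^ 2 * Y (t + 1) ω) := by
      refine ((condExp_mono hZ_int hW_int hZW).trans hcondW.le).trans (ae_of_all _ fun ω => ?_)
      show 1 + η ^ 2 * Y (t + 1) ω ≤ Real.exp (η ^ 2 * Y (t + 1) ω)
      have := Real.add_one_le_exp (η ^ 2 * Y (t + 1) ω)
      linarith
    calc P[f (t + 1)|𝓕 t] = P[G * Z|𝓕 t] := by rw [hdecomp]
      _ =ᵐ[P] G * P[Z|𝓕 t] := hpull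
      _ ≤ᵐ[P] f t := by
        filter_upwards [hcond] with ω hω
        have hGnn : 0 ≤ G ω := by
          simp only [hG]
          exact mul_nonneg (Real.exp_pos _).le (Real.exp_pos _).le
        calc G ω * (P[Z|𝓕 t]) ω ≤ G ω * Real.exp (η ^ 2 * Y (t + 1) ω) :=
              mul_le_mul_of_nonneg_left hω hGnn
          _ = f t ω := by
            simp only [hG]
            have hz : -(η ^ 2) * Y (t + 1) ω + η ^ 2 * Y (t + 1) ω = 0 := by ring
            rw [mul_assoc, ← Real.exp_add, hz, Real.exp_zero, mul_one]
  have hsuper : Supermartingale f 𝓕 P := supermartingale_nat had hfint hstep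
  have hville := my_ville hsuper (fun t ω => (Real.exp_pos _).le) hf0
    (a := 1 / δ') (by positivity)
  rw [one_div_one_div] at hville
  set bad := {ω | ∃ t, 1 / δ' ≤ f t ω} with hbad
  have hbad_meas : MeasurableSet bad := by
    have : bad = ⋃ t, {ω | 1 / δ' ≤ f t ω} := by ext ω; simp [hbad]
    rw [this]
    exact MeasurableSet.iUnion fun t =>
      measurableSet_le measurable_const ((had t).mono (𝓕.le t)).measurable
  have hsub : badᶜ ⊆ {ω | ∀ t : ℕ, 1 ≤ t →
      ∑ ℓ ∈ Finset.Icc 1 t, X ℓ ω ≤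
        η * ∑ ℓ ∈ Finset.Icc 1 t, (P[fun ω' => (X ℓ ω') ^ 2 | 𝓕 (ℓ - 1)]) ω +
          1 * Real.log ((t : ℝ) / δ') / η} := by
    intro ω hω t ht
    show ∑ ℓ ∈ Finset.Icc 1 t, X ℓ ω ≤
      η * ∑ ℓ ∈ Finset.Icc 1 t, Y ℓ ω + 1 * Real.log ((t : ℝ) / δ') / η
    have hflt : f t ω < 1 / δ' := lt_of_not_ge fun h => hω ⟨t, h⟩
    have hlog : η * ∑ ℓ ∈ Finset.Icc 1 t, X ℓ ω - η ^ 2 * ∑ ℓ ∈ Finset.Icc 1 t, Y ℓ ω ≤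
        Real.log (1 / δ') := by
      have h' := Real.log_lt_log (Real.exp_pos _) hflt
      rw [Real.log_exp] at h'
      exact h'.le
    have hlog2 : Real.log (1 / δ') ≤ Real.log ((t : ℝ) / δ') := by
      apply Real.log_le_log (by positivity)
      gcongr
      exact_mod_cast ht
    have key : ∑ ℓ ∈ Finset.Icc 1 t, X ℓ ω ≤
        η * ∑ ℓ ∈ Finset.Icc 1 t, Y ℓ ω + Real.log (1 / δ') / η := by
      rw [← mul_le_mul_iff_right₀ hη0]
      have heq : η * (η * ∑ ℓ ∈ Finset.Icc 1 t, Y ℓ ω + Real.log (1 / δ') / η) =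
          η ^ 2 * ∑ ℓ ∈ Finset.Icc 1 t, Y ℓ ω + Real.log (1 / δ') := by
        field_simp
      rw [heq]
      linarith
    have hd : Real.log (1 / δ') / η ≤ Real.log ((t : ℝ) / δ') / η := by gcongr
    rw [one_mul]
    linarith
  calc ENNReal.ofReal (1 - δ') = 1 - ENNReal.ofReal δ' := by
        rw [ENNReal.ofReal_sub _ hδ0.le, ENNReal.ofReal_one]
    _ ≤ 1 - P bad := tsub_le_tsub_left hville 1
    _ = P badᶜ := (prob_compl_eq_one_sub hbad_meas).symm
    _ ≤ P _ := measure_mono hsub
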